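/- arXiv:0806.3609 — 4 statements merged into one kernel-verified Lean document; each statement's English description precedes it below -/
import Mathlib

section
/- Let A ∈ ℝ^{n×n}, B ∈ ℝ^{n×1}, α ∈ (0,1). There exist P ≻ 0 and F ∈ ℝ^{1×n} such that α AᵀPA + (1-α)(A+BF)ᵀP(A+BF) - P ≺ 0 if and only if there exists P ≻ 0 such that AᵀPA - P - (1-α) AᵀPB (BᵀPB)⁻¹ BᵀPA ≺ 0 (interpreting the term as 0 when BᵀPB = 0). Moreover, when such P exists with BᵀPB > 0, the choice F = -(BᵀPB)⁻¹BᵀPA satisfies the first inequality with the same P. -/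
open Matrix

/-- Negative definiteness of a real symmetric matrix. -/
def NegDef {n : ℕ} (M : Matrix (Fin n) (Fin n) ℝ) : Prop := (-M).PosDef

lemma one_one_smul_one (M : Matrix (Fin 1) (Fin 1) ℝ) : M = (M 0 0) • 1 := by
  ext i j; fin_cases i; fin_cases j; simp

lemma one_one_inv (M : Matrix (Fin 1) (Fin 1) ℝ) (h : M 0 0 ≠ 0) : M⁻¹ = (M 0 0)⁻¹ • 1 := by
  apply inv_eq_right_inv
  nth_rewrite 1 [one_one_smul_one M]
  rw [smul_mul_smul_comm, mul_inv_cancel₀ h, one_mul, one_smul]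

lemma key_decomp {n : ℕ} (A P : Matrix (Fin n) (Fin n) ℝ) (B : Matrix (Fin n) (Fin 1) ℝ)
    (F : Matrix (Fin 1) (Fin n) ℝ) (hP : Pᵀ = P) (α : ℝ)
    (hσ : (Bᵀ * P * B) 0 0 ≠ 0) :
    α • (Aᵀ * P * A) + (1 - α) • ((A + B * F)ᵀ * P * (A + B * F)) - P
    = (Aᵀ * P * A - P - ((1 - α) / ((Bᵀ * P * B) 0 0)) • (Aᵀ * P * B * (Bᵀ * P * A)))
      + ((1 - α) * ((Bᵀ * P * B) 0 0)) •
        ((F + ((Bᵀ * P * B) 0 0)⁻¹ • (Bᵀ * P * A))ᵀ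
          * (F + ((Bᵀ * P * B) 0 0)⁻¹ • (Bᵀ * P * A))) := by
  set σ := (Bᵀ * P * B) 0 0 with hσdef
  have hcol : ∀ (X : Matrix (Fin 1) (Fin n) ℝ), Bᵀ * (P * (B * X)) = σ • X := by
    intro X
    rw [← Matrix.mul_assoc, ← Matrix.mul_assoc, one_one_smul_one (Bᵀ * P * B), smul_mul,
      Matrix.one_mul]
  simp only [transpose_add, transpose_mul, transpose_smul, transpose_transpose, hP,
    Matrix.add_mul, Matrix.mul_add, Matrix.smul_mul, Matrix.mul_smul, Matrix.mul_assoc, hcol,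
    smul_smul, smul_add]
  match_scalars
  all_goals (field_simp; try ring)

lemma key_expand {n : ℕ} (A P : Matrix (Fin n) (Fin n) ℝ) (B : Matrix (Fin n) (Fin 1) ℝ)
    (hP : Pᵀ = P) (α : ℝ) (hσ : (Bᵀ * P * B) 0 0 ≠ 0) :
    α • (Aᵀ * P * A)
      + (1 - α) • ((A + B * (-((Bᵀ * P * B)⁻¹ * (Bᵀ * P * A))))ᵀ * P
          * (A + B * (-((Bᵀ * P * B)⁻¹ * (Bᵀ * P * A)))))
      - P
    = Aᵀ * P * A - P
        - ((1 - α) / ((Bᵀ * P * B) 0 0)) • (Aᵀ * P * B * (Bᵀ * P * A)) := by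
  have hF : -((Bᵀ * P * B)⁻¹ * (Bᵀ * P * A))
      = -(((Bᵀ * P * B) 0 0)⁻¹ • (Bᵀ * P * A)) := by
    rw [one_one_inv _ hσ, smul_mul, Matrix.one_mul]
  rw [hF, key_decomp A P B _ hP α hσ, neg_add_cancel]
  simp

lemma entry_eq_quad {n : ℕ} (P : Matrix (Fin n) (Fin n) ℝ) (B : Matrix (Fin n) (Fin 1) ℝ)
    (hPt : Pᵀ = P) :
    (Bᵀ * P * B) 0 0 = star (fun i => B i 0) ⬝ᵥ P.mulVec (fun i => B i 0) := by
  simp [Matrix.mul_apply, dotProduct, mulVec, Finset.sum_mul, Finset.mul_sum]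
  ring_nf
  congr 1; ext i; congr 1; ext j
  rw [show P j i = P i j from congrFun (congrFun hPt i) j]
  ring

lemma sigma_nonneg {n : ℕ} {P : Matrix (Fin n) (Fin n) ℝ} {B : Matrix (Fin n) (Fin 1) ℝ}
    (hP : P.PosDef) (hPt : Pᵀ = P) : 0 ≤ (Bᵀ * P * B) 0 0 := by
  rw [entry_eq_quad P B hPt]
  exact hP.posSemidef.dotProduct_mulVec_nonneg _

lemma sigma_zero_B_zero {n : ℕ} {P : Matrix (Fin n) (Fin n) ℝ} {B : Matrix (Fin n) (Fin 1) ℝ}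
    (hP : P.PosDef) (hPt : Pᵀ = P) (h : (Bᵀ * P * B) 0 0 = 0) : B = 0 := by
  by_contra hB
  have hb : (fun i => B i 0) ≠ 0 := by
    intro hb0
    apply hB
    ext i j
    fin_cases j
    simpa using congrFun hb0 i
  have := hP.dotProduct_mulVec_pos hb
  rw [entry_eq_quad P B hPt] at h
  exact absurd h (ne_of_gt this)

lemma psd_smul {m : Type*} [Fintype m] {M : Matrix m m ℝ} (hM : M.PosSemidef) {c : ℝ}
    (hc : 0 ≤ c) : (c • M).PosSemidef := by
  have h1 : Mᵀ = M := by
    rw [← conjTranspose_eq_transpose_of_trivial]; exact hM.1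
  refine PosSemidef.of_dotProduct_mulVec_nonneg ?_ (fun x => ?_)
  · simp [Matrix.IsHermitian, conjTranspose_smul, h1]
  · rw [smul_mulVec, dotProduct_smul, smul_eq_mul]
    exact mul_nonneg hc (hM.dotProduct_mulVec_nonneg x)

lemma psd_GtG {n : ℕ} (G : Matrix (Fin 1) (Fin n) ℝ) : (Gᵀ * G).PosSemidef := by
  rw [← conjTranspose_eq_transpose_of_trivial]
  exact posSemidef_conjTranspose_mul_self G

/-- NegDef is preserved by subtracting a PSD matrix. -/
lemma negDef_sub_psd {n : ℕ} {M Q : Matrix (Fin n) (Fin n) ℝ} (hM : NegDef M)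
    (hQ : Q.PosSemidef) : NegDef (M - Q) := by
  unfold NegDef at *
  rw [show -(M - Q) = -M + Q by abel]
  exact hM.add_posSemidef hQ

/-- Equivalence between existence of a stabilizing gain and the Riccati-type inequality,
with the explicit gain `F = -(BᵀPB)⁻¹BᵀPA`.  (The coefficient `(1-α)/(BᵀPB)` is read as `0`
when `BᵀPB = 0`, as is automatic for real division.) -/
theorem gain_exists_iff_riccati
    {n : ℕ} (A : Matrix (Fin n) (Fin n) ℝ) (B : Matrix (Fin n) (Fin 1) ℝ)
    (α : ℝ) (hα : α ∈ Set.Ioo (0:ℝ) 1) :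
    ((∃ P : Matrix (Fin n) (Fin n) ℝ, ∃ F : Matrix (Fin 1) (Fin n) ℝ, P.PosDef ∧
        NegDef (α • (Aᵀ * P * A) + (1 - α) • ((A + B * F)ᵀ * P * (A + B * F)) - P))
      ↔ (∃ P : Matrix (Fin n) (Fin n) ℝ, P.PosDef ∧
        NegDef (Aᵀ * P * A - P
          - ((1 - α) / ((Bᵀ * P * B) 0 0)) • (Aᵀ * P * B * (Bᵀ * P * A)))))
    ∧ (∀ P : Matrix (Fin n) (Fin n) ℝ, P.PosDef →
        0 < (Bᵀ * P * B) 0 0 →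
        NegDef (Aᵀ * P * A - P
          - ((1 - α) / ((Bᵀ * P * B) 0 0)) • (Aᵀ * P * B * (Bᵀ * P * A))) →
        NegDef (α • (Aᵀ * P * A)
          + (1 - α) • ((A + B * (-((Bᵀ * P * B)⁻¹ * (Bᵀ * P * A))))ᵀ * P
              * (A + B * (-((Bᵀ * P * B)⁻¹ * (Bᵀ * P * A)))))
          - P)) := by
  obtain ⟨hα0, hα1⟩ := hα
  have hcombine : ∀ (M P : Matrix (Fin n) (Fin n) ℝ),
      α • M + (1 - α) • M - P = M - P := by
    intro M P
    module
  constructor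
  · constructor
    · rintro ⟨P, F, hPpos, hneg⟩
      have hPt : Pᵀ = P := by
        rw [← conjTranspose_eq_transpose_of_trivial]; exact hPpos.isHermitian
      refine ⟨P, hPpos, ?_⟩
      by_cases hσ : (Bᵀ * P * B) 0 0 = 0
      · have hB : B = 0 := sigma_zero_B_zero hPpos hPt hσ
        subst hB
        simp only [Matrix.zero_mul, Matrix.mul_zero, add_zero, smul_zero, sub_zero,
          transpose_zero] at hneg ⊢
        rwa [hcombine] at hneg
      · rw [key_decomp A P B F hPt α hσ] at hneg
        have hσpos : 0 < (Bᵀ * P * B) 0 0 :=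
          lt_of_le_of_ne (sigma_nonneg hPpos hPt) (Ne.symm hσ)
        set R := Aᵀ * P * A - P
          - ((1 - α) / ((Bᵀ * P * B) 0 0)) • (Aᵀ * P * B * (Bᵀ * P * A)) with hR
        set Q := ((1 - α) * ((Bᵀ * P * B) 0 0)) •
          ((F + ((Bᵀ * P * B) 0 0)⁻¹ • (Bᵀ * P * A))ᵀ
            * (F + ((Bᵀ * P * B) 0 0)⁻¹ • (Bᵀ * P * A))) with hQ
        have hQpsd : Q.PosSemidef :=
          psd_smul (psd_GtG _) (mul_nonneg (by linarith) hσpos.le)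
        rw [show R = (R + Q) - Q by abel]
        exact negDef_sub_psd hneg hQpsd
    · rintro ⟨P, hPpos, hneg⟩
      have hPt : Pᵀ = P := by
        rw [← conjTranspose_eq_transpose_of_trivial]; exact hPpos.isHermitian
      by_cases hσ : (Bᵀ * P * B) 0 0 = 0
      · have hB : B = 0 := sigma_zero_B_zero hPpos hPt hσ
        subst hB
        refine ⟨P, 0, hPpos, ?_⟩
        simp only [Matrix.zero_mul, Matrix.mul_zero, add_zero, smul_zero, sub_zero,
          transpose_zero] at hneg ⊢
        rwa [hcombine]
      · exact ⟨P, -((Bᵀ * P * B)⁻¹ * (Bᵀ * P * A)), hPpos, by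
          rwa [key_expand A P B hPt α hσ]⟩
  · intro P hPpos hσpos hneg
    have hPt : Pᵀ = P := by
      rw [← conjTranspose_eq_transpose_of_trivial]; exact hPpos.isHermitian
    rwa [key_expand A P B hPt α (ne_of_gt hσpos)]
end

section
/- Let A ∈ ℝ^{n×n}, B ∈ ℝ^{n×1}, α ∈ (0,1). Suppose P ≻ 0 satisfies AᵀPA - P - (1-α) AᵀPB (BᵀPB)⁻¹ BᵀPA ≺ 0 with BᵀPB > 0. Then there exists μ > 0 with μ < 1/(α BᵀPB) such that Q := μP satisfies both AᵀQA - Q - AᵀQB (1/(1-α) + BᵀQB)⁻¹ BᵀQA ≺ 0 and 1/α - BᵀQB > 0. -/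
open Matrix

/-- Cauchy–Schwarz for the bilinear form of a positive semidefinite real matrix. -/
lemma cs_psd {n : ℕ} {G : Matrix (Fin n) (Fin n) ℝ} (hG : G.PosSemidef)
    (u x : Fin n → ℝ) :
    (u ⬝ᵥ G *ᵥ x) ^ 2 ≤ (u ⬝ᵥ G *ᵥ u) * (x ⬝ᵥ G *ᵥ x) := by
  have hGt : Gᵀ = G := by
    rw [← Matrix.conjTranspose_eq_transpose_of_trivial]; exact hG.1
  have hsymm : ∀ a b : Fin n → ℝ, a ⬝ᵥ G *ᵥ b = b ⬝ᵥ G *ᵥ a := by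
    intro a b
    rw [dotProduct_mulVec, ← Matrix.mulVec_transpose, hGt, dotProduct_comm]
  have key : ∀ t : ℝ, 0 ≤ (u ⬝ᵥ G *ᵥ u) * (t * t)
      + (2 * (u ⬝ᵥ G *ᵥ x)) * t + (x ⬝ᵥ G *ᵥ x) := by
    intro t
    have h0 : 0 ≤ (x + t • u) ⬝ᵥ G *ᵥ (x + t • u) := by
      simpa using hG.dotProduct_mulVec_nonneg (x + t • u)
    have hexp : (x + t • u) ⬝ᵥ G *ᵥ (x + t • u)
        = (u ⬝ᵥ G *ᵥ u) * (t * t) + (2 * (u ⬝ᵥ G *ᵥ x)) * t + (x ⬝ᵥ G *ᵥ x) := by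
      have hxu := hsymm x u
      simp only [Matrix.mulVec_add, Matrix.mulVec_smul, add_dotProduct,
        dotProduct_add, dotProduct_smul, smul_dotProduct, smul_eq_mul]
      rw [hxu]; ring
    linarith [hexp ▸ h0]
  have hd := discrim_le_zero key
  rw [discrim] at hd
  nlinarith [hd]

set_option maxHeartbeats 1000000 in
/-- Scaling argument: from the Riccati-type inequality one obtains, for a suitable
scaling `Q = μ P` with `0 < μ < 1/(α BᵀPB)`, the perturbed Riccati inequality together
with `1/α - BᵀQB > 0`. -/
theorem riccati_scaling
    {n : ℕ} (A : Matrix (Fin n) (Fin n) ℝ) (B : Matrix (Fin n) (Fin 1) ℝ)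
    (P : Matrix (Fin n) (Fin n) ℝ) (α : ℝ) (hα : α ∈ Set.Ioo (0:ℝ) 1)
    (hB : B ≠ 0) (hP : P.PosDef) (hb : 0 < (Bᵀ * P * B) 0 0)
    (hric : NegDef (Aᵀ * P * A - P
        - ((1 - α) / ((Bᵀ * P * B) 0 0)) • (Aᵀ * P * B * (Bᵀ * P * A)))) :
    ∃ μ : ℝ, 0 < μ ∧ μ < 1 / (α * ((Bᵀ * P * B) 0 0)) ∧
      (NegDef (Aᵀ * (μ • P) * A - μ • P
          - (1 / (1 / (1 - α) + (Bᵀ * (μ • P) * B) 0 0))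
              • (Aᵀ * (μ • P) * B * (Bᵀ * (μ • P) * A)))
        ∧ 0 < 1 / α - (Bᵀ * (μ • P) * B) 0 0) := by
  obtain ⟨hα0, hα1⟩ := hα
  set b : ℝ := (Bᵀ * P * B) 0 0 with hbdef
  set β : ℝ := 1 - α with hβdef
  have hβ0 : 0 < β := by simp [hβdef]; linarith
  -- transpose facts
  have hPt : Pᵀ = P := by
    rw [← Matrix.conjTranspose_eq_transpose_of_trivial]; exact hP.1
  have realHerm : ∀ M : Matrix (Fin n) (Fin n) ℝ, Mᵀ = M → M.IsHermitian := by
    intro M hM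
    rw [Matrix.IsHermitian, Matrix.conjTranspose_eq_transpose_of_trivial, hM]
  have hwt : (Aᵀ * P * B)ᵀ = Bᵀ * P * A := by
    rw [Matrix.transpose_mul, Matrix.transpose_mul, Matrix.transpose_transpose, hPt,
      Matrix.mul_assoc]
  set S : Matrix (Fin n) (Fin n) ℝ := Aᵀ * P * B * (Bᵀ * P * A) with hSdef
  set G : Matrix (Fin n) (Fin n) ℝ :=
    -(Aᵀ * P * A - P - (β / b) • S) with hGdef
  have hG : G.PosDef := hric
  have hSt : Sᵀ = S := by
    rw [hSdef, Matrix.transpose_mul, hwt, ← hwt, Matrix.transpose_transpose]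
  set v : Fin n → ℝ := fun j => (Bᵀ * P * A) 0 j with hvdef
  -- quadratic form of S is (v ⬝ᵥ x)^2
  have quadS : ∀ x : Fin n → ℝ, x ⬝ᵥ S *ᵥ x = (v ⬝ᵥ x) ^ 2 := by
    intro x
    have h1 : S *ᵥ x = (Aᵀ * P * B) *ᵥ ((Bᵀ * P * A) *ᵥ x) := by
      rw [hSdef, mulVec_mulVec]
    rw [h1, dotProduct_mulVec, ← mulVec_transpose, hwt]
    have h2 : ∀ y : Fin 1 → ℝ, ((Bᵀ * P * A) *ᵥ x) ⬝ᵥ y = ((Bᵀ * P * A) *ᵥ x) 0 * y 0 := by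
      intro y; simp [dotProduct]
    rw [h2]
    have h3 : ((Bᵀ * P * A) *ᵥ x) 0 = v ⬝ᵥ x := by
      simp [Matrix.mulVec, hvdef, dotProduct]
    rw [h3]; ring
  -- invert G to get the Cauchy–Schwarz constant
  have hGunit : IsUnit G.det := hG.det_pos.ne'.isUnit
  set u : Fin n → ℝ := G⁻¹ *ᵥ v with hudef
  have hGu : G *ᵥ u = v := by
    rw [hudef, mulVec_mulVec, Matrix.mul_nonsing_inv _ hGunit, Matrix.one_mulVec]
  set K : ℝ := u ⬝ᵥ G *ᵥ u with hKdef
  have hK0 : 0 ≤ K := by simpa [hKdef] using hG.posSemidef.dotProduct_mulVec_nonneg u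
  have cs : ∀ x : Fin n → ℝ, (v ⬝ᵥ x) ^ 2 ≤ K * (x ⬝ᵥ G *ᵥ x) := by
    intro x
    have h1 : v ⬝ᵥ x = u ⬝ᵥ G *ᵥ x := by
      rw [dotProduct_mulVec]
      have hGt : Gᵀ = G := by
        rw [← Matrix.conjTranspose_eq_transpose_of_trivial]; exact hG.1
      rw [← Matrix.mulVec_transpose, hGt, hGu]
    rw [h1]
    exact cs_psd hG.posSemidef u x
  -- choose μ
  set δ : ℝ := min (1/2) (b / (2 * (β * K + 1))) with hδdef
  have hδpos : 0 < δ := by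
    apply lt_min (by norm_num)
    apply div_pos hb
    nlinarith [mul_nonneg hβ0.le hK0]
  have hδlt : δ < 1 := lt_of_le_of_lt (min_le_left _ _) (by norm_num)
  have hδK : β * K * δ / b < 1 := by
    have h1 : δ ≤ b / (2 * (β * K + 1)) := min_le_right _ _
    have h2 : 0 < 2 * (β * K + 1) := by nlinarith [mul_nonneg hβ0.le hK0]
    rw [div_lt_one hb]
    calc β * K * δ ≤ β * K * (b / (2 * (β * K + 1))) := by
          apply mul_le_mul_of_nonneg_left h1 (mul_nonneg hβ0.le hK0)
      _ < b := by
          rw [mul_div_assoc']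
          rw [div_lt_iff₀ h2]
          nlinarith [mul_nonneg hβ0.le hK0]
  set μ : ℝ := (1 - δ) / (α * b) with hμdef
  have hαb : 0 < α * b := mul_pos hα0 hb
  have hμpos : 0 < μ := div_pos (by linarith) hαb
  have hμlt : μ < 1 / (α * b) := by
    rw [hμdef, div_lt_div_iff₀ hαb hαb]
    nlinarith
  have hμb : μ * b = (1 - δ) / α := by
    rw [hμdef]; field_simp
  have hαμb : α * (μ * b) = 1 - δ := by rw [hμb]; field_simp
  refine ⟨μ, hμpos, hμlt, ?_, ?_⟩
  · -- main Riccati inequality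
    have hBP : (Bᵀ * (μ • P) * B) 0 0 = μ * b := by
      have : Bᵀ * (μ • P) * B = μ • (Bᵀ * P * B) := by
        rw [Matrix.mul_smul, Matrix.smul_mul]
      rw [this]; simp [hbdef]
    set e : ℝ := 1 / β + μ * b with hedef
    have he0 : 0 < e := by
      rw [hedef]
      have : 0 < μ * b := mul_pos hμpos hb
      positivity
    set c : ℝ := μ * β / b - μ * μ / e with hcdef
    -- c ≥ 0
    have hc0 : 0 ≤ c := by
      rw [hcdef, sub_nonneg, div_le_div_iff₀ he0 hb]
      have h1 : μ * b ≤ β * e := by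
        rw [hedef]
        have : β * (1 / β + μ * b) = 1 + β * (μ * b) := by
          field_simp
        rw [this]
        nlinarith [mul_pos hμpos hb]
      nlinarith
    -- c * K < μ
    have hcK : c * K < μ := by
      have hcle : c ≤ μ * β * δ / b := by
        rw [hcdef]
        have h1 : e ≤ 1 / (α * β) := by
          rw [hedef]
          have h2 : μ * b ≤ 1 / α := by
            rw [hμb, div_le_div_iff₀ hα0 hα0]; nlinarith
          have : 1 / β + 1 / α = 1 / (α * β) := by field_simp [hβ0.ne', hα0.ne']; ring
          linarith
        have h3 : α * β * (μ * μ) ≤ μ * μ / e := by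
          rw [le_div_iff₀ he0]
          calc α * β * (μ * μ) * e ≤ α * β * (μ * μ) * (1 / (α * β)) := by
                apply mul_le_mul_of_nonneg_left h1
                positivity
            _ = μ * μ := by field_simp
        have h4 : μ * β / b - α * β * (μ * μ) = μ * β * δ / b := by
          have hb' : b ≠ 0 := hb.ne'
          have h5 : α * β * (μ * μ) = μ * β / b * (α * (μ * b)) := by
            clear_value μ; rw [div_mul_eq_mul_div, eq_div_iff hb']; ring
          rw [h5, hαμb]; ring
        linarith
      calc c * K ≤ (μ * β * δ / b) * K := mul_le_mul_of_nonneg_right hcle hK0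
        _ < μ := by
          have : (μ * β * δ / b) * K = μ * (β * K * δ / b) := by ring
          rw [this]
          nlinarith [hδK, hμpos]
    -- rewrite the target matrix
    have hmat : -(Aᵀ * (μ • P) * A - μ • P
          - (1 / (1 / (1 - α) + (Bᵀ * (μ • P) * B) 0 0))
              • (Aᵀ * (μ • P) * B * (Bᵀ * (μ • P) * A)))
        = μ • G - c • S := by
      rw [hBP]
      have h1 : Aᵀ * (μ • P) * A = μ • (Aᵀ * P * A) := by
        rw [Matrix.mul_smul, Matrix.smul_mul]
      have h2 : Aᵀ * (μ • P) * B * (Bᵀ * (μ • P) * A) = (μ * μ) • S := by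
        rw [hSdef]
        simp only [Matrix.mul_smul, Matrix.smul_mul, smul_smul]
      rw [h1, h2, hGdef, smul_smul]
      have hcoef : μ * (β / b) - c = 1 / (1 / (1 - α) + μ * b) * (μ * μ) := by
        rw [hcdef, hedef, ← hβdef]
        have hb' : b ≠ 0 := hb.ne'
        field_simp
        ring
      rw [← hcoef]
      ext i j
      simp only [Matrix.sub_apply, Matrix.neg_apply, Matrix.smul_apply,
        Matrix.sub_apply, smul_eq_mul]
      ring
    rw [NegDef, hmat]
    apply Matrix.PosDef.of_dotProduct_mulVec_pos
    · -- Hermitian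
      have hGt2 : Gᵀ = G := by
        rw [← Matrix.conjTranspose_eq_transpose_of_trivial]; exact hG.1
      apply realHerm
      rw [Matrix.transpose_sub, Matrix.transpose_smul, Matrix.transpose_smul, hGt2, hSt]
    · intro x hx
      have hGx : 0 < x ⬝ᵥ G *ᵥ x := by simpa using hG.dotProduct_mulVec_pos hx
      have hval : star x ⬝ᵥ (μ • G - c • S) *ᵥ x
          = μ * (x ⬝ᵥ G *ᵥ x) - c * (v ⬝ᵥ x) ^ 2 := by
        rw [star_trivial, Matrix.sub_mulVec, Matrix.smul_mulVec,
          Matrix.smul_mulVec, dotProduct_sub, dotProduct_smul, dotProduct_smul,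
          smul_eq_mul, smul_eq_mul, quadS]
      rw [hval]
      have h5 : c * (v ⬝ᵥ x) ^ 2 ≤ c * (K * (x ⬝ᵥ G *ᵥ x)) :=
        mul_le_mul_of_nonneg_left (cs x) hc0
      nlinarith [hcK, hGx]
  · -- 1/α - μ b > 0
    have hBP : (Bᵀ * (μ • P) * B) 0 0 = μ * b := by
      have : Bᵀ * (μ • P) * B = μ • (Bᵀ * P * B) := by
        rw [Matrix.mul_smul, Matrix.smul_mul]
      rw [this]; simp [hbdef]
    rw [hBP, hμb, sub_pos, div_lt_div_iff₀ hα0 hα0]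
    nlinarith
end

section
/- Let a ∈ ℝ with |a| > 1 (scalar plant x_{k+1} = a x_k + b u_k, b ≠ 0) and α ∈ (0,1). There exist p > 0 and f ∈ ℝ such that α a² p + (1-α)(a+bf)² p - p < 0 if and only if α < 1/a². (Scalar case of the critical loss probability for stochastic stabilization.) -/
/-- Scalar case of the critical loss probability for stochastic stabilization:
for `|a| > 1`, `b ≠ 0`, a mean-square stabilizing gain exists iff `α < 1/a²`. -/
theorem scalar_critical_loss_probability
    (a b α : ℝ) (ha : 1 < |a|) (hb : b ≠ 0) (hα : α ∈ Set.Ioo (0:ℝ) 1) :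
    (∃ p : ℝ, 0 < p ∧ ∃ f : ℝ,
        α * a ^ 2 * p + (1 - α) * (a + b * f) ^ 2 * p - p < 0)
      ↔ α < 1 / a ^ 2 := by
  have ha0 : a ≠ 0 := by intro h; simp [h] at ha; linarith
  have ha2 : (0:ℝ) < a ^ 2 := by positivity
  obtain ⟨hα0, hα1⟩ := hα
  constructor
  · rintro ⟨p, hp, f, h⟩
    have hnn : 0 ≤ (1 - α) * (a + b * f) ^ 2 * p := by
      have : (0:ℝ) ≤ 1 - α := by linarith
      positivity
    have h1 : α * a ^ 2 * p - p < 0 := by linarith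
    have h2 : α * a ^ 2 < 1 := by
      nlinarith
    rw [lt_div_iff₀ ha2]
    linarith
  · intro h
    refine ⟨1, one_pos, -a / b, ?_⟩
    have : a + b * (-a / b) = 0 := by field_simp; ring
    rw [this]
    have : α * a ^ 2 < 1 := by
      rw [lt_div_iff₀ ha2] at h; linarith
    nlinarith
end

section
/- Let A ∈ ℝ^{n×n}, B ∈ ℝ^{n×m}, α ∈ (0,1). If there exist P ≻ 0 and F ∈ ℝ^{m×n} satisfying α AᵀPA + (1-α)(A+BF)ᵀP(A+BF) - P ≺ 0, then α |λ|² < 1 for every eigenvalue λ of A; i.e., α < 1/ρ(A)² where ρ is the spectral radius. (Necessary bound on the loss probability for mean-square stabilizability, MIMO case.) -/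
open Matrix

lemma exists_eigenvector_of_mem_spectrum {n : ℕ} {M : Matrix (Fin n) (Fin n) ℂ} {l : ℂ}
    (hl : l ∈ spectrum ℂ M) : ∃ v : Fin n → ℂ, v ≠ 0 ∧ M.mulVec v = l • v := by
  rw [spectrum.mem_iff] at hl
  have hdet : (algebraMap ℂ (Matrix (Fin n) (Fin n) ℂ) l - M).det = 0 := by
    by_contra hd
    exact hl ((Matrix.isUnit_iff_isUnit_det _).mpr (isUnit_iff_ne_zero.mpr hd))
  obtain ⟨v, hv, hMv⟩ := (Matrix.exists_mulVec_eq_zero_iff).mpr hdet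
  refine ⟨v, hv, ?_⟩
  have := hMv
  rw [sub_mulVec] at this
  have halg : (algebraMap ℂ (Matrix (Fin n) (Fin n) ℂ) l).mulVec v = l • v := by
    ext i
    simp [Matrix.algebraMap_matrix_apply, mulVec, dotProduct, Finset.sum_ite_eq,
      Pi.smul_apply, smul_eq_mul]
  rw [halg] at this
  exact (sub_eq_zero.mp this).symm

lemma re_quadform_pos_of_posDef {n : ℕ} {Q : Matrix (Fin n) (Fin n) ℝ} (hQ : Q.PosDef)
    (v : Fin n → ℂ) (hv : v ≠ 0) :
    0 < (star v ⬝ᵥ (Q.map (algebraMap ℝ ℂ)).mulVec v).re := by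
  set a : Fin n → ℝ := fun i => (v i).re with ha
  set b : Fin n → ℝ := fun i => (v i).im with hb
  have key : (star v ⬝ᵥ (Q.map (algebraMap ℝ ℂ)).mulVec v).re
      = a ⬝ᵥ Q.mulVec a + b ⬝ᵥ Q.mulVec b := by
    simp only [dotProduct, mulVec, Pi.star_apply, Matrix.map_apply, Finset.mul_sum]
    rw [Complex.re_sum, ← Finset.sum_add_distrib]
    refine Finset.sum_congr rfl fun i _ => ?_
    rw [Complex.re_sum, ← Finset.sum_add_distrib]
    refine Finset.sum_congr rfl fun j _ => ?_
    simp only [RCLike.star_def, Complex.mul_re, Complex.mul_im, Complex.conj_re,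
      Complex.conj_im, Complex.ofReal_re, Complex.ofReal_im, Complex.coe_algebraMap, ha, hb]
    ring
  rw [key]
  have hab : a ≠ 0 ∨ b ≠ 0 := by
    by_contra hc
    push_neg at hc
    apply hv
    ext i
    have h1 := congrFun hc.1 i
    have h2 := congrFun hc.2 i
    simp only [ha, hb, Pi.zero_apply] at h1 h2
    exact Complex.ext h1 h2
  have hsa : 0 ≤ a ⬝ᵥ Q.mulVec a := by simpa using hQ.posSemidef.dotProduct_mulVec_nonneg a
  have hsb : 0 ≤ b ⬝ᵥ Q.mulVec b := by simpa using hQ.posSemidef.dotProduct_mulVec_nonneg b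
  rcases hab with h | h
  · have := hQ.dotProduct_mulVec_pos h; simp only [star_trivial] at this; linarith
  · have := hQ.dotProduct_mulVec_pos h; simp only [star_trivial] at this; linarith

/-- Necessary bound on the loss probability for mean-square stabilizability (MIMO case):
if some `P ≻ 0` and gain `F` satisfy the closed-loop inequality, then
`α |λ|² < 1` for every eigenvalue `λ` of `A`. -/
theorem necessary_loss_probability_bound_mimo
    {n m : ℕ} (A : Matrix (Fin n) (Fin n) ℝ) (B : Matrix (Fin n) (Fin m) ℝ)
    (α : ℝ) (hα : α ∈ Set.Ioo (0:ℝ) 1)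
    (P : Matrix (Fin n) (Fin n) ℝ) (F : Matrix (Fin m) (Fin n) ℝ)
    (hP : P.PosDef)
    (h : NegDef (α • (Aᵀ * P * A)
          + (1 - α) • ((A + B * F)ᵀ * P * (A + B * F)) - P)) :
    ∀ l ∈ spectrum ℂ (A.map (algebraMap ℝ ℂ)), α * ‖l‖ ^ 2 < 1 := by
  obtain ⟨hα0, hα1⟩ := hα
  intro l hl
  set M := A + B * F with hM
  -- Step 1 : Q := P - α • AᵀPA is positive definite
  have hQherm : (P - α • (Aᵀ * P * A)).IsHermitian := by
    have hPh : Pᵀ = P := hP.isHermitian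
    unfold Matrix.IsHermitian
    rw [conjTranspose_eq_transpose_of_trivial]
    simp [transpose_smul, transpose_mul, Matrix.mul_assoc, hPh]
  have hQ : (P - α • (Aᵀ * P * A)).PosDef := by
    refine PosDef.of_dotProduct_mulVec_pos hQherm fun x hx => ?_
    have hneg := PosDef.dotProduct_mulVec_pos h hx
    have hMx : 0 ≤ (M.mulVec x) ⬝ᵥ P.mulVec (M.mulVec x) := by
      simpa using hP.posSemidef.dotProduct_mulVec_nonneg (M.mulVec x)
    have hMq : x ⬝ᵥ (Mᵀ * P * M).mulVec x = (M.mulVec x) ⬝ᵥ P.mulVec (M.mulVec x) := by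
      rw [← mulVec_mulVec, ← mulVec_mulVec, dotProduct_mulVec, vecMul_transpose]
    simp only [star_trivial, neg_sub, sub_mulVec, add_mulVec, smul_mulVec,
      dotProduct_sub, dotProduct_add, dotProduct_smul, smul_eq_mul] at hneg ⊢
    rw [hMq] at hneg
    nlinarith
  -- Step 2 : eigenvector
  obtain ⟨v, hv, hAv⟩ := exists_eigenvector_of_mem_spectrum hl
  set Ac := A.map (algebraMap ℝ ℂ) with hAc
  set Pc := P.map (algebraMap ℝ ℂ) with hPc
  have hmap : (P - α • (Aᵀ * P * A)).map (algebraMap ℝ ℂ)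
      = Pc - (α : ℂ) • (Acᵀ * Pc * Ac) := by
    ext i j
    simp [hAc, hPc, Matrix.mul_apply, Finset.mul_sum, Matrix.sub_apply, mul_assoc,
      mul_comm, mul_left_comm]
  have hpos := re_quadform_pos_of_posDef hQ v hv
  rw [hmap] at hpos
  -- Step 3 : compute the quadratic form on the eigenvector
  set s : ℂ := star v ⬝ᵥ Pc.mulVec v with hs
  have hsre : 0 < s.re := re_quadform_pos_of_posDef hP v hv
  have hAA : star v ⬝ᵥ (Acᵀ * Pc * Ac).mulVec v = (Complex.normSq l : ℂ) * s := by
    have htr : Acᵀ = Acᴴ := by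
      ext i j; simp [hAc, conjTranspose_apply]
    have hAA' : star v ⬝ᵥ (Acᴴ * Pc * Ac) *ᵥ v = star (Ac *ᵥ v) ⬝ᵥ Pc *ᵥ (Ac *ᵥ v) := by
      simp only [star_mulVec, dotProduct_mulVec, vecMul_vecMul, Matrix.mul_assoc]
    rw [htr, hAA', hAv]
    simp only [hs, star_smul, smul_dotProduct, mulVec_smul, dotProduct_smul,
      smul_eq_mul, RCLike.star_def]
    rw [← mul_assoc, Complex.mul_conj]
  have hexp : (star v ⬝ᵥ (Pc - (α : ℂ) • (Acᵀ * Pc * Ac)).mulVec v).re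
      = s.re - α * (Complex.normSq l * s.re) := by
    rw [sub_mulVec, dotProduct_sub, smul_mulVec, dotProduct_smul, hAA]
    simp [Complex.sub_re, Complex.mul_re, Complex.ofReal_re, Complex.ofReal_im]
    try ring
  rw [hexp] at hpos
  have hnorm : ‖l‖ ^ 2 = Complex.normSq l := by
    rw [Complex.sq_norm]
  rw [hnorm]
  nlinarith
end
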